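/- Over the fraction field Q of R, there is a direct sum decomposition of Q-bimodules Q ⊗_{Q^s} Q ≅ Q ⊕ Q_s, where Q_s denotes Q with right action twisted by s. -/

import Mathlib

open MvPolynomial

/-- The linear polynomial in `R = Sym(𝔥*)` corresponding to the element of `𝔥*`
with coordinates `φ` (identifying `𝔥` with `Fin n → k` so that `𝔥*` has dual basis
corresponding to the variables `X i`). -/
noncomputable def lin {k : Type*} [CommRing k] {n : ℕ} (φ : Fin n → k) :
    MvPolynomial (Fin n) k :=
  ∑ i, C (φ i) * X i

/-- The reflection `s` acting on `R = Sym(𝔥*)`, induced by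
`s(γ) = γ - ⟨α^∨, γ⟩·α` on `𝔥*`, where `α^∨ ∈ 𝔥` has coordinates `αv` and
`α ∈ 𝔥*` has coordinates `α`. -/
noncomputable def sRefl {k : Type*} [CommRing k] {n : ℕ} (αv α : Fin n → k) :
    MvPolynomial (Fin n) k →ₐ[k] MvPolynomial (Fin n) k :=
  aeval (fun i => X i - C (αv i) * lin α)

open scoped TensorProduct

lemma sRefl_lin {k : Type*} [CommRing k] {n : ℕ} (αv α φ : Fin n → k) :
    sRefl αv α (lin φ) = lin φ - C (∑ i, αv i * φ i) * lin α := by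
  rw [show lin φ = ∑ i, C (φ i) * X i from rfl, map_sum, map_sum, Finset.sum_mul,
    ← Finset.sum_sub_distrib]
  refine Finset.sum_congr rfl fun i _ => ?_
  simp only [sRefl, map_mul, aeval_C, aeval_X, MvPolynomial.algebraMap_eq, map_mul]
  ring

lemma sRefl_lin_self {k : Type*} [CommRing k] {n : ℕ} (αv α : Fin n → k)
    (hpair : ∑ i, αv i * α i = 2) :
    sRefl αv α (lin α) = - lin α := by
  rw [sRefl_lin, hpair, map_ofNat]
  ring

lemma sRefl_invol {k : Type*} [CommRing k] {n : ℕ} (αv α : Fin n → k)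
    (hpair : ∑ i, αv i * α i = 2) (q : MvPolynomial (Fin n) k) :
    sRefl αv α (sRefl αv α q) = q := by
  have : (sRefl αv α).comp (sRefl αv α) = AlgHom.id k (MvPolynomial (Fin n) k) := by
    apply MvPolynomial.algHom_ext
    intro i
    simp only [AlgHom.comp_apply, AlgHom.id_apply]
    rw [show sRefl αv α (X i) = X i - C (αv i) * lin α from aeval_X _ i,
      map_sub, map_mul, show sRefl αv α (C (αv i)) = C (αv i) from aeval_C _ _,
      sRefl_lin_self αv α hpair,
      show sRefl αv α (X i) = X i - C (αv i) * lin α from aeval_X _ i]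
    ring
  exact congrArg (fun F => F q) this |>.trans rfl |>.trans rfl

set_option maxHeartbeats 1000000 in
set_option synthInstance.maxHeartbeats 200000 in
/-- Abstract form of the decomposition: over any field `Q` with a `k`-algebra
automorphism `σ` which is an involution, given `a ≠ 0` with `σ a = -a` and `δ`
with `σ δ = δ - a`, the tensor product of `Q` with itself over the fixed
subalgebra decomposes via `f ⊗ g ↦ (f·g, f·σ(g))`. -/
theorem Q_tensor_decomposition_aux {k Q : Type*} [CommRing k] [Field Q] [Algebra k Q]
    (σ : Q ≃ₐ[k] Q) (hσσ : ∀ x, σ (σ x) = x) (a δ : Q) (ha : a ≠ 0)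
    (hσa : σ a = -a) (hσδ : σ δ = δ - a) :
    ∃ p : (Q ⊗[↥(AlgHom.equalizer σ.toAlgHom (AlgHom.id k Q))] Q) →ₗ[k] Q × Q,
      (∀ f g : Q, p (f ⊗ₜ g) = (f * g, f * σ g)) ∧
      (∀ (x : Q ⊗[↥(AlgHom.equalizer σ.toAlgHom (AlgHom.id k Q))] Q) (g : Q),
        p (x * ((1:Q) ⊗ₜ g)) = ((p x).1 * g, (p x).2 * σ g)) ∧
      Function.Bijective p := by
  set S := AlgHom.equalizer σ.toAlgHom (AlgHom.id k Q) with hS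
  have hmem : ∀ c : S, σ (c : Q) = c := fun c => c.2
  have hsmul : ∀ (c : S) (q : Q), c • q = (c : Q) * q := by
    intro c q; rw [Algebra.smul_def]; rfl
  -- the bilinear map
  let B : Q →ₗ[S] Q →ₗ[S] Q × Q := LinearMap.mk₂ S (fun f g => (f * g, f * σ g))
    (fun f f' g => by simp [add_mul, Prod.ext_iff])
    (fun c f g => by simp only [hsmul, Prod.smul_mk, smul_eq_mul, Prod.ext_iff]
                     constructor <;> ring)
    (fun f g g' => by simp [mul_add, Prod.ext_iff])
    (fun c f g => by simp only [hsmul, map_mul, hmem, Prod.smul_mk, smul_eq_mul, Prod.ext_iff]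
                     constructor <;> ring)
  let pS : (Q ⊗[S] Q) →ₗ[S] Q × Q := TensorProduct.lift B
  let p : (Q ⊗[S] Q) →ₗ[k] Q × Q :=
    { toFun := pS
      map_add' := map_add pS
      map_smul' := by
        intro c t
        induction t using TensorProduct.induction_on with
        | zero => simp
        | tmul f g =>
            rw [TensorProduct.smul_tmul']
            show pS ((c • f) ⊗ₜ g) = c • pS (f ⊗ₜ g)
            rw [show pS ((c • f) ⊗ₜ g) = ((c • f) * g, (c • f) * σ g) from rfl,
              show pS (f ⊗ₜ g) = (f * g, f * σ g) from rfl]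
            simp [smul_mul_assoc, Prod.ext_iff]
        | add x y hx hy =>
            have hx' : pS (c • x) = c • pS x := hx
            have hy' : pS (c • y) = c • pS y := hy
            show pS (c • (x + y)) = c • pS (x + y)
            rw [smul_add, map_add, hx', hy', map_add, smul_add] }
  have hp : ∀ f g : Q, p (f ⊗ₜ g) = (f * g, f * σ g) := fun f g => rfl
  have span : ∀ t : Q ⊗[S] Q, ∃ x y : Q, t = x ⊗ₜ (1:Q) + y ⊗ₜ δ := by
    intro t
    induction t using TensorProduct.induction_on with
    | zero => exact ⟨0, 0, by simp⟩
    | tmul f g =>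
        set b : Q := (g - σ g) / a with hb
        set a' : Q := g - b * δ with ha'
        have hbmem : b ∈ S := by
          show σ b = b
          rw [hb, map_div₀, map_sub, hσσ, hσa, div_neg]
          ring
        have hσb : σ b = b := hbmem
        have hba : b * a = g - σ g := div_mul_cancel₀ _ ha
        have ha'mem : a' ∈ S := by
          show σ a' = a'
          rw [ha', map_sub, map_mul, hσb, hσδ]
          linear_combination hba
        have hg : g = (⟨a', ha'mem⟩ : S) • (1:Q) + (⟨b, hbmem⟩ : S) • δ := by
          rw [hsmul, hsmul]; simp [ha']
        have key : ∀ (c : S) (x : Q), f ⊗ₜ[S] (c • x) = ((c : Q) * f) ⊗ₜ[S] x := by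
          intro c x
          rw [← TensorProduct.smul_tmul, ← hsmul]
        refine ⟨a' * f, b * f, ?_⟩
        rw [hg, TensorProduct.tmul_add, key, key]
    | add x y hx hy =>
        obtain ⟨x1, y1, h1⟩ := hx
        obtain ⟨x2, y2, h2⟩ := hy
        exact ⟨x1 + x2, y1 + y2, by
          rw [h1, h2, TensorProduct.add_tmul, TensorProduct.add_tmul]; abel⟩
  refine ⟨p, hp, ?_, ?_, ?_⟩
  · intro x g
    induction x using TensorProduct.induction_on with
    | zero => simp; rfl
    | tmul f h =>
        rw [Algebra.TensorProduct.tmul_mul_tmul, hp, hp]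
        simp [mul_assoc, map_mul]
    | add x y hx hy =>
        rw [add_mul, map_add, map_add, hx, hy]
        simp only [Prod.fst_add, Prod.snd_add, Prod.mk_add_mk, Prod.ext_iff]
        constructor <;> ring
  · -- injective
    intro t1 t2 h
    have h0 : p (t1 - t2) = 0 := by rw [map_sub, h, sub_self]
    obtain ⟨x, y, hxy⟩ := span (t1 - t2)
    rw [hxy, map_add, hp, hp] at h0
    have h1 : x * 1 + y * δ = 0 := congrArg Prod.fst h0
    have h2 : x * σ 1 + y * σ δ = 0 := congrArg Prod.snd h0
    rw [map_one, hσδ] at h2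
    have hy0 : y = 0 := by
      have hya : y * a = 0 := by linear_combination h1 - h2
      exact (mul_eq_zero.mp hya).resolve_right ha
    have hx0 : x = 0 := by rw [hy0] at h1; simpa using h1
    have hsub : t1 - t2 = 0 := by rw [hxy, hx0, hy0]; simp
    exact sub_eq_zero.mp hsub
  · rintro ⟨u, v⟩
    refine ⟨(u - (u - v) / a * δ) ⊗ₜ (1:Q) + ((u - v) / a) ⊗ₜ δ, ?_⟩
    rw [map_add, hp, hp]
    have : (u - v) / a * a = u - v := div_mul_cancel₀ _ ha
    ext
    · simp only [Prod.fst_add]; ring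
    · simp only [Prod.snd_add, map_one, hσδ]
      linear_combination -this

set_option maxHeartbeats 2000000 in
set_option synthInstance.maxHeartbeats 400000 in
/-- Over the fraction field `Q` of `R`, there is a direct sum
decomposition of `Q`-bimodules `Q ⊗_{Q^s} Q ≅ Q ⊕ Q_s`, where `Q_s` denotes `Q` with
the right action twisted by `s` (here given by the automorphism `σ` extending `s`).
The two projections are `f ⊗ g ↦ f·g` and `f ⊗ g ↦ f·σ(g)`, and together they give
a bijection onto `Q × Q` compatible with the (twisted) right actions. -/
theorem Q_tensor_decomposition {k : Type*} [CommRing k] [IsDomain k] {n : ℕ}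
    (αv α : Fin n → k) (hpair : ∑ i, αv i * α i = 2)
    (hDS1 : ∃ δ : Fin n → k, ∑ i, αv i * δ i = 1)
    (hDS2 : ∃ v : Fin n → k, ∑ i, α i * v i = 1)
    (σ : FractionRing (MvPolynomial (Fin n) k) ≃ₐ[k] FractionRing (MvPolynomial (Fin n) k))
    (hσ : ∀ r : MvPolynomial (Fin n) k,
      σ (algebraMap (MvPolynomial (Fin n) k) (FractionRing (MvPolynomial (Fin n) k)) r) =
        algebraMap (MvPolynomial (Fin n) k) (FractionRing (MvPolynomial (Fin n) k))
          (sRefl αv α r)) :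
    ∃ p : (FractionRing (MvPolynomial (Fin n) k)
          ⊗[↥(AlgHom.equalizer σ.toAlgHom (AlgHom.id k (FractionRing (MvPolynomial (Fin n) k))))]
          FractionRing (MvPolynomial (Fin n) k)) →ₗ[k]
        (FractionRing (MvPolynomial (Fin n) k) × FractionRing (MvPolynomial (Fin n) k)),
      (∀ f g : FractionRing (MvPolynomial (Fin n) k),
        p (f ⊗ₜ g) = (f * g, f * σ g)) ∧
      (∀ (x : FractionRing (MvPolynomial (Fin n) k)
            ⊗[↥(AlgHom.equalizer σ.toAlgHom
                (AlgHom.id k (FractionRing (MvPolynomial (Fin n) k))))]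
            FractionRing (MvPolynomial (Fin n) k))
          (g : FractionRing (MvPolynomial (Fin n) k)),
        p (x * ((1 : FractionRing (MvPolynomial (Fin n) k)) ⊗ₜ g)) =
          ((p x).1 * g, (p x).2 * σ g)) ∧
      Function.Bijective p := by
  obtain ⟨δf, hδf⟩ := hDS1
  obtain ⟨v, hv⟩ := hDS2
  set R := MvPolynomial (Fin n) k
  set Q := FractionRing R
  set A := algebraMap R Q with hA
  have hAinj : Function.Injective A := IsFractionRing.injective R Q
  -- the element a
  have hlin : lin α ≠ (0 : R) := by
    intro h
    have h1 := congrArg (eval v) h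
    rw [show lin α = ∑ i, C (α i) * X i from rfl] at h1
    simp only [map_sum, map_mul, eval_C, eval_X, map_zero] at h1
    rw [hv] at h1
    exact one_ne_zero h1
  have ha : A (lin α) ≠ 0 := fun h => hlin (hAinj (h.trans (map_zero A).symm))
  -- σ is an involution
  have hσσ : ∀ x : Q, σ (σ x) = x := by
    intro x
    obtain ⟨r, s, -, rfl⟩ := IsFractionRing.div_surjective (A := R) x
    rw [map_div₀, map_div₀, hσ, hσ, hσ, hσ, sRefl_invol αv α hpair, sRefl_invol αv α hpair]
  have hσa : σ (A (lin α)) = -(A (lin α)) := by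
    rw [hσ, sRefl_lin_self αv α hpair, map_neg]
  have hσδ : σ (A (lin δf)) = A (lin δf) - A (lin α) := by
    rw [hσ, sRefl_lin, hδf, map_one, one_mul, map_sub]
  exact Q_tensor_decomposition_aux σ hσσ (A (lin α)) (A (lin δf)) ha hσa hσδ
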